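/- Let p, q be positive integers, n = p + q, and let u be a descending shuffle in S_n. If w is any permutation of {1,…,n} with r_w(i,p) = r_u(i,p) for all i ∈ {1,…,n}, then w ≤ u in the Bruhat order. In other words, u is the unique maximal element of the set {w ∈ S_n : r_w(i,p) = r_u(i,p) for all i}. -/

import Mathlib

def rk {n : ℕ} (w : Equiv.Perm (Fin n)) (i j : ℕ) : ℕ :=
  (Finset.univ.filter (fun k : Fin n => (k : ℕ) + 1 ≤ i ∧ (w k : ℕ) + 1 ≤ j)).card

def BruhatLE {n : ℕ} (u v : Equiv.Perm (Fin n)) : Prop :=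
  ∀ i j : ℕ, rk v i j ≤ rk u i j

def DescShuffle (p : ℕ) {n : ℕ} (u : Equiv.Perm (Fin n)) : Prop :=
  ∀ i j : Fin n, i < j →
    ((u i : ℕ) + 1 ≤ p ∧ (u j : ℕ) + 1 ≤ p → u j < u i) ∧
    (p < (u i : ℕ) + 1 ∧ p < (u j : ℕ) + 1 → u j < u i)

open Finset

/-- Splitting the rank by the value interval `[j, j')`. -/
lemma rk_split {n : ℕ} (w : Equiv.Perm (Fin n)) (i : ℕ) {j j' : ℕ} (h : j ≤ j') :
    rk w i j' = rk w i j +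
      (univ.filter fun k : Fin n => (k : ℕ) + 1 ≤ i ∧ j ≤ (w k : ℕ) ∧ (w k : ℕ) < j').card := by
  classical
  rw [rk, rk, ← Finset.card_union_of_disjoint]
  · congr 1
    ext k
    simp only [mem_union, mem_filter, mem_univ, true_and]
    omega
  · rw [Finset.disjoint_left]
    intro k h1 h2
    simp only [mem_filter, mem_univ, true_and] at h1 h2
    omega

/-- The number of positions whose value lies in `[a, b)` is at most `b - a`. -/
lemma card_filter_val_Ico {n : ℕ} (w : Equiv.Perm (Fin n)) (P : Fin n → Prop)
    [DecidablePred P] (a b : ℕ) :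
    (univ.filter fun k : Fin n => P k ∧ a ≤ (w k : ℕ) ∧ (w k : ℕ) < b).card ≤ b - a := by
  calc (univ.filter fun k : Fin n => P k ∧ a ≤ (w k : ℕ) ∧ (w k : ℕ) < b).card
      ≤ (Finset.Ico a b).card := ?_
    _ = b - a := Nat.card_Ico a b
  apply Finset.card_le_card_of_injOn (fun k => (w k : ℕ))
  · intro k hk
    simp only [Finset.mem_coe, mem_filter, mem_univ, true_and] at hk
    simp only [Finset.mem_coe, Finset.mem_Ico]
    exact ⟨hk.2.1, hk.2.2⟩
  · intro x _ y _ hxy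
    exact w.injective (Fin.val_injective hxy)

/-- If every value in `[a,b)` has its preimage satisfying `P`, there are at least `b - a`
positions with `P` and value in `[a,b)`. -/
lemma card_ge_of_preimages {n : ℕ} (hn0 : 0 < n) (w : Equiv.Perm (Fin n)) (P : Fin n → Prop)
    [DecidablePred P] {a b : ℕ} (hb : b ≤ n)
    (H : ∀ v : ℕ, a ≤ v → (h2 : v < b) → P (w.symm ⟨v, lt_of_lt_of_le h2 hb⟩)) :
    b - a ≤ (univ.filter fun k : Fin n => P k ∧ a ≤ (w k : ℕ) ∧ (w k : ℕ) < b).card := by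
  have key := Finset.card_le_card_of_injOn
    (f := fun v : ℕ => w.symm ⟨v % n, Nat.mod_lt _ hn0⟩)
    (s := Finset.Ico a b)
    (t := univ.filter fun k : Fin n => P k ∧ a ≤ (w k : ℕ) ∧ (w k : ℕ) < b) ?_ ?_
  · simpa using key
  · intro v hv
    simp only [Finset.mem_coe, Finset.mem_Ico] at hv
    have hvn : v < n := lt_of_lt_of_le hv.2 hb
    have hmod : v % n = v := Nat.mod_eq_of_lt hvn
    simp only [Finset.mem_coe, mem_filter, mem_univ, true_and]
    have heq : (⟨v % n, Nat.mod_lt _ hn0⟩ : Fin n) = ⟨v, hvn⟩ := by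
      simp only [Fin.mk.injEq]; exact hmod
    rw [heq]
    refine ⟨H v hv.1 hv.2, ?_, ?_⟩ <;> rw [Equiv.apply_symm_apply]
    · exact hv.1
    · exact hv.2
  · intro x hx y hy hxy
    simp only [Finset.coe_Ico, Set.mem_Ico] at hx hy
    have hx' : x % n = x := Nat.mod_eq_of_lt (lt_of_lt_of_le hx.2 hb)
    have hy' : y % n = y := Nat.mod_eq_of_lt (lt_of_lt_of_le hy.2 hb)
    have := w.symm.injective hxy
    rw [Fin.mk.injEq, hx', hy'] at this
    exact this

lemma rk_clamp {n : ℕ} (v : Equiv.Perm (Fin n)) (i j : ℕ) :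
    rk v i j = rk v (min i n) (min j n) := by
  unfold rk
  congr 1
  ext k
  simp only [mem_filter, mem_univ, true_and]
  have h1 : (k : ℕ) < n := k.isLt
  have h2 : (v k : ℕ) < n := (v k).isLt
  omega

theorem stmt3 (p q n : ℕ) (hp : 0 < p) (hq : 0 < q) (hn : n = p + q)
    (u : Equiv.Perm (Fin n)) (hu : DescShuffle p u)
    (w : Equiv.Perm (Fin n))
    (hw : ∀ i : ℕ, 1 ≤ i → i ≤ n → rk w i p = rk u i p) :
    BruhatLE w u := by
  classical
  have hn0 : 0 < n := by omega
  have hpn : p < n := by omega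
  have hw' : ∀ i, i ≤ n → rk w i p = rk u i p := by
    intro i hi
    rcases Nat.eq_zero_or_pos i with rfl | hi1
    · have z : ∀ (v : Equiv.Perm (Fin n)), rk v 0 p = 0 := by
        intro v
        rw [rk, Finset.card_eq_zero, Finset.filter_eq_empty_iff]
        intro k _
        omega
      rw [z w, z u]
    · exact hw i hi1 hi
  suffices main : ∀ i j, i ≤ n → j ≤ n → rk u i j ≤ rk w i j by
    intro i j
    rw [rk_clamp u, rk_clamp w]
    exact main _ _ (min_le_right _ _) (min_le_right _ _)
  intro i j hi hj
  rcases le_or_gt j p with hjp | hpj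
  · -- j ≤ p: small value case
    rcases Nat.eq_zero_or_pos (rk u i j) with h0 | hpos
    · omega
    · -- some small value ≤ j appeared among the first i positions
      obtain ⟨k0, hk0⟩ : ∃ k0 : Fin n, (k0 : ℕ) + 1 ≤ i ∧ (u k0 : ℕ) + 1 ≤ j := by
        rw [rk] at hpos
        obtain ⟨k, hk⟩ := Finset.card_pos.mp hpos
        simp only [mem_filter, mem_univ, true_and] at hk
        exact ⟨k, hk⟩
      -- all values in [j, p) have appeared among the first i positions
      have key : ∀ v : ℕ, j ≤ v → (h2 : v < p) →
          ((u.symm ⟨v, lt_of_lt_of_le h2 (le_of_lt hpn)⟩ : Fin n) : ℕ) + 1 ≤ i := by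
        intro v hv1 hv2
        set k : Fin n := u.symm ⟨v, lt_of_lt_of_le hv2 (le_of_lt hpn)⟩ with hk
        have huk : (u k : ℕ) = v := by rw [hk, Equiv.apply_symm_apply]
        have hkk0 : k < k0 := by
          rcases lt_trichotomy k k0 with h | h | h
          · exact h
          · exfalso; rw [h] at huk; omega
          · exfalso
            have := (hu k0 k h).1 ⟨by omega, by omega⟩
            rw [Fin.lt_def] at this
            omega
        rw [Fin.lt_def] at hkk0
        omega
      have hC := card_ge_of_preimages hn0 u
        (fun k : Fin n => (k : ℕ) + 1 ≤ i) (le_of_lt hpn) key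
      beta_reduce at hC
      have hsplitu := rk_split u i hjp
      have hsplitw := rk_split w i hjp
      have hIco := card_filter_val_Ico w (fun k : Fin n => (k : ℕ) + 1 ≤ i) j p
      have heq := hw' i hi
      omega
  · -- p < j ≤ n : large value case
    have hpj' : p ≤ j := le_of_lt hpj
    have hsplitu := rk_split u i hpj'
    rcases Nat.eq_zero_or_pos
        (univ.filter fun k : Fin n => (k : ℕ) + 1 ≤ i ∧ p ≤ (u k : ℕ) ∧ (u k : ℕ) < j).card
      with h0 | hpos
    · -- rk u i j = rk u i p = rk w i p ≤ rk w i j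
      have heq := hw' i hi
      have hmono : rk w i p ≤ rk w i j := by
        have := rk_split w i hpj'
        omega
      omega
    · obtain ⟨k0, hk0⟩ : ∃ k0 : Fin n, (k0 : ℕ) + 1 ≤ i ∧ p ≤ (u k0 : ℕ) ∧ (u k0 : ℕ) < j := by
        obtain ⟨k, hk⟩ := Finset.card_pos.mp hpos
        simp only [mem_filter, mem_univ, true_and] at hk
        exact ⟨k, hk⟩
      have key : ∀ v : ℕ, j ≤ v → (h2 : v < n) →
          ((u.symm ⟨v, lt_of_lt_of_le h2 (le_refl n)⟩ : Fin n) : ℕ) + 1 ≤ i := by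
        intro v hv1 hv2
        set k : Fin n := u.symm ⟨v, lt_of_lt_of_le hv2 (le_refl n)⟩ with hk
        have huk : (u k : ℕ) = v := by rw [hk, Equiv.apply_symm_apply]
        have hkk0 : k < k0 := by
          rcases lt_trichotomy k k0 with h | h | h
          · exact h
          · exfalso; rw [h] at huk; omega
          · exfalso
            have := (hu k0 k h).2 ⟨by omega, by omega⟩
            rw [Fin.lt_def] at this
            omega
        rw [Fin.lt_def] at hkk0
        omega
      have hD := card_ge_of_preimages hn0 u
        (fun k : Fin n => (k : ℕ) + 1 ≤ i) (le_refl n) key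
      beta_reduce at hD
      have hun := rk_split u i hj
      have hwn := rk_split w i hj
      have hIco := card_filter_val_Ico w (fun k : Fin n => (k : ℕ) + 1 ≤ i) j n
      -- rk u i n = rk w i n : both count positions < i
      have htop : rk u i n = rk w i n := by
        unfold rk
        have e1 : ∀ (v : Equiv.Perm (Fin n)),
            (univ.filter fun k : Fin n => (k : ℕ) + 1 ≤ i ∧ (v k : ℕ) + 1 ≤ n) =
            (univ.filter fun k : Fin n => (k : ℕ) + 1 ≤ i) := by
          intro v
          ext k
          simp only [mem_filter, mem_univ, true_and]
          have := (v k).isLt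
          omega
        rw [e1 u, e1 w]
      omega
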